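/- Let Λ be an n×n complex diagonal matrix whose diagonal entries are pairwise distinct, and let T be any n×n complex matrix. Define an undirected graph G on the vertex set {1,…,n} by joining i and j (i ≠ j) whenever T_{ij} ≠ 0 or T_{ji} ≠ 0. Then the only subspaces of ℂⁿ invariant under all four matrices Λ, Λ†, T, T† are 0 and ℂⁿ if and only if G is connected. -/

import Mathlib

open scoped Matrix

open Matrix Polynomial in
private lemma diag_poly_mem {n : ℕ} (d : Fin n → ℂ) (W : Submodule ℂ (Fin n → ℂ))
    (hW : ∀ v ∈ W, (Matrix.diagonal d).mulVec v ∈ W) (p : ℂ[X]) :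
    ∀ v ∈ W, (Matrix.diagonal (fun j => p.eval (d j))).mulVec v ∈ W := by
  induction p using Polynomial.induction_on with
  | C a =>
    intro v hv
    have : (Matrix.diagonal (fun j => (C a).eval (d j))).mulVec v = a • v := by
      funext x; simp [Matrix.mulVec_diagonal]
    rw [this]; exact W.smul_mem a hv
  | add p q hp hq =>
    intro v hv
    have : (Matrix.diagonal (fun j => (p + q).eval (d j))).mulVec v =
        (Matrix.diagonal (fun j => p.eval (d j))).mulVec v +
        (Matrix.diagonal (fun j => q.eval (d j))).mulVec v := by
      funext x; simp [Matrix.mulVec_diagonal]; ring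
    rw [this]; exact W.add_mem (hp v hv) (hq v hv)
  | monomial m a hm =>
    intro v hv
    have : (Matrix.diagonal (fun j => (C a * X ^ (m + 1)).eval (d j))).mulVec v =
        (Matrix.diagonal d).mulVec
          ((Matrix.diagonal (fun j => (C a * X ^ m).eval (d j))).mulVec v) := by
      funext x; simp [Matrix.mulVec_diagonal]; ring
    rw [this]; exact hW _ (hm v hv)

open Matrix in
private lemma single_mem_of_ne_zero {n : ℕ} {d : Fin n → ℂ} (hd : Function.Injective d)
    {W : Submodule ℂ (Fin n → ℂ)}
    (hW : ∀ v ∈ W, (Matrix.diagonal d).mulVec v ∈ W) {v : Fin n → ℂ} (hv : v ∈ W)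
    {i : Fin n} (hvi : v i ≠ 0) : Pi.single i (1 : ℂ) ∈ W := by
  set p := Lagrange.basis Finset.univ d i with hp
  have hmem := diag_poly_mem d W hW p v hv
  have hInj : Set.InjOn d ↑(Finset.univ : Finset (Fin n)) := hd.injOn
  have heq : (Matrix.diagonal (fun j => p.eval (d j))).mulVec v = v i • (Pi.single i 1 : Fin n → ℂ) := by
    funext j
    rw [Matrix.mulVec_diagonal]
    by_cases hji : j = i
    · subst hji
      rw [hp, Lagrange.eval_basis_self hInj (Finset.mem_univ _)]
      simp
    · rw [hp, Lagrange.eval_basis_of_ne (fun h => hji h.symm) (Finset.mem_univ j)]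
      simp [Pi.single_apply, hji]
  rw [heq] at hmem
  have := W.smul_mem (v i)⁻¹ hmem
  rwa [smul_smul, inv_mul_cancel₀ hvi, one_smul] at this

/-- For `Λ` diagonal with pairwise distinct diagonal entries and `T` arbitrary, the
representation is irreducible (the only subspaces invariant under `Λ, Λᴴ, T, Tᴴ` are
`0` and `ℂⁿ`) if and only if the undirected graph joining `i ≠ j` whenever
`T i j ≠ 0` or `T j i ≠ 0` is connected. -/
theorem irreducible_iff_graph_connected (n : ℕ) (hn : 0 < n)
    (dΛ : Fin n → ℂ) (hdistinct : Function.Injective dΛ)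
    (Λ T : Matrix (Fin n) (Fin n) ℂ) (hΛ : Λ = Matrix.diagonal dΛ) :
    (∀ W : Submodule ℂ (Fin n → ℂ),
        (∀ v ∈ W, Λ.mulVec v ∈ W) → (∀ v ∈ W, Λᴴ.mulVec v ∈ W) →
        (∀ v ∈ W, T.mulVec v ∈ W) → (∀ v ∈ W, Tᴴ.mulVec v ∈ W) →
        W = ⊥ ∨ W = ⊤) ↔
      (SimpleGraph.fromRel (fun i j : Fin n => T i j ≠ 0)).Connected := by
  subst hΛ
  set G := SimpleGraph.fromRel (fun i j : Fin n => T i j ≠ 0) with hG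
  have hne : Nonempty (Fin n) := ⟨⟨0, hn⟩⟩
  constructor
  · -- irreducible → connected
    intro hirr
    by_contra hconn
    rw [SimpleGraph.connected_iff] at hconn
    push_neg at hconn
    obtain ⟨i, j, hij⟩ : ∃ i j : Fin n, ¬ G.Reachable i j := by
      by_contra h; push_neg at h; exact (not_isEmpty_of_nonempty (Fin n)) (hconn fun a b => h a b)
    -- the coordinate subspace of the component of i
    set W : Submodule ℂ (Fin n → ℂ) :=
      { carrier := {v | ∀ k, ¬ G.Reachable i k → v k = 0}
        add_mem' := fun ha hb k hk => by simp [ha k hk, hb k hk]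
        zero_mem' := fun k _ => rfl
        smul_mem' := fun c v hv k hk => by simp [hv k hk] } with hW
    have hWmem : ∀ v : Fin n → ℂ, v ∈ W ↔ ∀ k, ¬ G.Reachable i k → v k = 0 := fun v => Iff.rfl
    have hT : ∀ (M : Matrix (Fin n) (Fin n) ℂ),
        (∀ k l, ¬ G.Reachable i k → G.Reachable i l → M k l = 0) →
        ∀ v ∈ W, M.mulVec v ∈ W := by
      intro M hM v hv
      rw [hWmem] at hv ⊢
      intro k hk
      show (fun x => M k x) ⬝ᵥ v = 0
      rw [dotProduct]
      refine Finset.sum_eq_zero fun l _ => ?_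
      by_cases hl : G.Reachable i l
      · rw [hM k l hk hl, zero_mul]
      · rw [hv l hl, mul_zero]
    have hadj : ∀ k l, ¬ G.Reachable i k → G.Reachable i l → ¬ G.Adj l k := by
      intro k l hk hl hadj
      exact hk (hl.trans hadj.reachable)
    have hTkl : ∀ k l, ¬ G.Reachable i k → G.Reachable i l → T k l = 0 ∧ T l k = 0 := by
      intro k l hk hl
      have hne' : k ≠ l := fun h => hk (h ▸ hl)
      have := hadj k l hk hl
      rw [hG, SimpleGraph.fromRel_adj] at this
      push_neg at this
      have h2 := this hne'.symm
      exact ⟨h2.2, h2.1⟩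
    rcases hirr W
      (hT _ (fun k l hk hl => by
        rcases eq_or_ne k l with rfl | hkl
        · exact absurd hl hk
        · simp [Matrix.diagonal_apply_ne _ hkl]))
      (hT _ (fun k l hk hl => by
        rcases eq_or_ne k l with rfl | hkl
        · exact absurd hl hk
        · simp [Matrix.conjTranspose_apply, Matrix.diagonal_apply_ne _ (Ne.symm hkl)]))
      (hT _ (fun k l hk hl => (hTkl k l hk hl).1))
      (hT _ (fun k l hk hl => by
        rw [Matrix.conjTranspose_apply, (hTkl k l hk hl).2, star_zero])) with hbot | htop
    · -- but single i ∈ W and is nonzero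
      have : Pi.single i (1 : ℂ) ∈ W := by
        rw [hWmem]
        intro k hk
        have : k ≠ i := fun h => hk (by rw [h])
        simp [Pi.single_apply, this]
      rw [hbot, Submodule.mem_bot] at this
      have := congrFun this i
      simp at this
    · -- but single j ∉ W
      have : Pi.single j (1 : ℂ) ∈ W := htop ▸ Submodule.mem_top
      rw [hWmem] at this
      have := this j hij
      simp at this
  · -- connected → irreducible
    intro hconn W h1 h2 h3 h4
    by_cases hbot : W = ⊥
    · exact Or.inl hbot
    right
    obtain ⟨v, hv, hv0⟩ := Submodule.exists_mem_ne_zero_of_ne_bot hbot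
    obtain ⟨i, hvi⟩ := Function.ne_iff.mp hv0
    have hi : Pi.single i (1 : ℂ) ∈ W := single_mem_of_ne_zero hdistinct h1 hv hvi
    have step : ∀ k l, G.Adj k l → Pi.single k (1 : ℂ) ∈ W → Pi.single l (1 : ℂ) ∈ W := by
      intro k l hadj hk
      rw [hG, SimpleGraph.fromRel_adj] at hadj
      obtain ⟨hkl, hT'⟩ := hadj
      rcases hT' with h | h
      · -- T k l ≠ 0 : use Tᴴ
        have hmem := h4 _ hk
        rw [Matrix.mulVec_single] at hmem
        refine single_mem_of_ne_zero hdistinct h1 hmem (i := l) ?_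
        simp [Matrix.conjTranspose_apply, h]
      · -- T l k ≠ 0 : use T
        have hmem := h3 _ hk
        rw [Matrix.mulVec_single] at hmem
        refine single_mem_of_ne_zero hdistinct h1 hmem (i := l) ?_
        simp [h]
    have walk : ∀ (a b : Fin n) (w : G.Walk a b),
        Pi.single a (1 : ℂ) ∈ W → Pi.single b (1 : ℂ) ∈ W := by
      intro a b w
      induction w with
      | nil => exact id
      | cons h p ih => exact fun ha => ih (step _ _ h ha)
    have hall : ∀ k, Pi.single k (1 : ℂ) ∈ W := by
      intro k
      obtain ⟨w⟩ := hconn.preconnected i k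
      exact walk i k w hi
    rw [eq_top_iff]
    intro u _
    have : u = ∑ k, u k • (Pi.single k 1 : Fin n → ℂ) := by
      funext m
      simp [Pi.single_apply, Finset.sum_apply]
    rw [this]
    exact Submodule.sum_mem W fun k _ => W.smul_mem _ (hall k)
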